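/- Let X be a locally finite CAT(0) cube complex and let β, γ be combinatorial geodesic rays with β(0) = γ(0) such that every hyperplane crossing β crosses every hyperplane crossing γ. Then there exists a combinatorial geodesic ray σ with σ(0)=β(0) whose set of crossing hyperplanes equals W(β) ∪ W(γ). -/

import Mathlib

/-- The set of walls separating `u` from `v`. Walls model the hyperplanes of a
CAT(0) cube complex (via its median 1-skeleton) through a halfspace indicator. -/
def sepSet {V W : Type*} (side : W → V → Bool) (u v : V) : Set W :=
  {w | side w u ≠ side w v}

/-- `γ : ℕ → V` is a combinatorial geodesic ray in `Γ`. -/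
def IsGeodesicRay {V : Type*} (Γ : SimpleGraph V) (γ : ℕ → V) : Prop :=
  (∀ t : ℕ, Γ.Adj (γ t) (γ (t + 1))) ∧ ∀ s t : ℕ, s ≤ t → Γ.dist (γ s) (γ t) = t - s

/-- The set of hyperplanes crossed by the ray `γ`. -/
def raysWalls {V W : Type*} (side : W → V → Bool) (γ : ℕ → V) : Set W :=
  {w | ∃ t : ℕ, side w (γ t) ≠ side w (γ (t + 1))}

/-- Two hyperplanes cross: all four quarterspaces are nonempty. -/
def WallsCross {V W : Type*} (side : W → V → Bool) (w₁ w₂ : W) : Prop :=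
  ∀ b₁ b₂ : Bool, ∃ v : V, side w₁ v = b₁ ∧ side w₂ v = b₂

/-- `m` is a median of `x`, `y`, `z`. -/
def IsMedianPt {V : Type*} (Γ : SimpleGraph V) (x y z m : V) : Prop :=
  Γ.dist x m + Γ.dist m y = Γ.dist x y ∧
    Γ.dist x m + Γ.dist m z = Γ.dist x z ∧
    Γ.dist y m + Γ.dist m z = Γ.dist y z

/-- A median graph: any three vertices have a unique median. -/
def IsMedianGraph {V : Type*} (Γ : SimpleGraph V) : Prop :=
  ∀ x y z : V, ∃! m : V, IsMedianPt Γ x y z m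

section Aux

variable {V W : Type*}

theorem sep_symmDiff (side : W → V → Bool) (u v x : V) :
    sepSet side u x = symmDiff (sepSet side u v) (sepSet side v x) := by
  ext w
  simp only [sepSet, Set.mem_symmDiff, Set.mem_setOf_eq]
  cases h1 : side w u <;> cases h2 : side w v <;> cases h3 : side w x <;> simp

theorem sep_comm (side : W → V → Bool) (u v : V) :
    sepSet side u v = sepSet side v u := by
  ext w
  simp only [sepSet, Set.mem_setOf_eq]
  exact ne_comm

theorem sep_self (side : W → V → Bool) (u : V) : sepSet side u u = ∅ := by
  ext w
  simp [sepSet]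

theorem inter_empty_of_ncard_symmDiff {A B : Set W} (hA : A.Finite) (hB : B.Finite)
    (h : (symmDiff A B).ncard = A.ncard + B.ncard) : A ∩ B = ∅ := by
  have hd : symmDiff A B = (A ∪ B) \ (A ∩ B) := by
    ext x
    simp only [Set.mem_symmDiff, Set.mem_diff, Set.mem_union, Set.mem_inter_iff]
    tauto
  have h1 : (A ∪ B).ncard + (A ∩ B).ncard = A.ncard + B.ncard :=
    Set.ncard_union_add_ncard_inter A B hA hB
  have hsub : A ∩ B ⊆ A ∪ B := Set.inter_subset_left.trans Set.subset_union_left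
  have h2 : ((A ∪ B) \ (A ∩ B)).ncard = (A ∪ B).ncard - (A ∩ B).ncard :=
    Set.ncard_diff hsub (hA.inter_of_left B)
  have h3 : (A ∩ B).ncard ≤ (A ∪ B).ncard :=
    Set.ncard_le_ncard hsub (hA.union hB)
  rw [hd, h2] at h
  have : (A ∩ B).ncard = 0 := by omega
  exact (Set.ncard_eq_zero (hA.inter_of_left B)).mp this

end Aux

/-- in the (locally finite, median) 1-skeleton of a CAT(0) cube
complex, if `β, γ` are combinatorial geodesic rays with `β 0 = γ 0` such that
every hyperplane crossing `β` crosses every hyperplane crossing `γ`, then there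
is a combinatorial geodesic ray `σ` with `σ 0 = β 0` whose set of crossed
hyperplanes is `W(β) ∪ W(γ)`. -/
theorem union_walls_ray_exists {V W : Type*} (Γ : SimpleGraph V)
    (hconn : Γ.Connected) (hlf : ∀ v : V, (Γ.neighborSet v).Finite)
    (hmedian : IsMedianGraph Γ)
    (side : W → V → Bool)
    (hfin : ∀ u v : V, (sepSet side u v).Finite)
    (hdist : ∀ u v : V, Γ.dist u v = (sepSet side u v).ncard)
    (β γ : ℕ → V) (hβ : IsGeodesicRay Γ β) (hγ : IsGeodesicRay Γ γ)
    (h0 : β 0 = γ 0)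
    (hcross : ∀ w₁ ∈ raysWalls side β, ∀ w₂ ∈ raysWalls side γ,
      WallsCross side w₁ w₂) :
    ∃ σ : ℕ → V, IsGeodesicRay Γ σ ∧ σ 0 = β 0 ∧
      raysWalls side σ = raysWalls side β ∪ raysWalls side γ := by
  classical
  obtain ⟨hβadj, hβd⟩ := hβ
  obtain ⟨hγadj, hγd⟩ := hγ
  set o : V := β 0 with ho
  have hoγ : o = γ 0 := h0
  have bne : ∀ a : Bool, a ≠ !a := by decide
  -- basic consequences of the wall structure
  have hsep_eq : ∀ u v : V, sepSet side u v = ∅ → u = v := by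
    intro u v h
    have : Γ.dist u v = 0 := by rw [hdist, h, Set.ncard_empty]
    exact (hconn.dist_eq_zero_iff).mp this
  have hadj1 : ∀ u v : V, (sepSet side u v).ncard = 1 → Γ.Adj u v := by
    intro u v h
    have : Γ.dist u v = 1 := by rw [hdist]; exact h
    exact SimpleGraph.dist_eq_one_iff_adj.mp this
  have hsplit : ∀ u v x : V, Γ.dist u v + Γ.dist v x = Γ.dist u x →
      sepSet side u v ∩ sepSet side v x = ∅ ∧
      sepSet side u x = sepSet side u v ∪ sepSet side v x := by
    intro u v x h
    rw [hdist, hdist, hdist, sep_symmDiff side u v x] at h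
    have hdisj : sepSet side u v ∩ sepSet side v x = ∅ :=
      inter_empty_of_ncard_symmDiff (hfin u v) (hfin v x) h.symm
    refine ⟨hdisj, ?_⟩
    have hforall := Set.eq_empty_iff_forall_notMem.mp hdisj
    rw [sep_symmDiff side u v x]
    ext w
    have := hforall w
    simp only [Set.mem_symmDiff, Set.mem_union, Set.mem_inter_iff] at this ⊢
    tauto
  -- distances from the origin along the rays
  have hdo_β : ∀ n, Γ.dist o (β n) = n := by
    intro n
    have := hβd 0 n (Nat.zero_le n)
    simpa using this
  have hdo_γ : ∀ n, Γ.dist o (γ n) = n := by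
    intro n
    have := hγd 0 n (Nat.zero_le n)
    rw [← hoγ] at this
    simpa using this
  set A : ℕ → Set W := fun n => sepSet side o (β n) with hAdef
  set B : ℕ → Set W := fun n => sepSet side o (γ n) with hBdef
  set N : ℕ → Set W := fun n => sepSet side (β n) (β (n + 1)) with hNdef
  set M : ℕ → Set W := fun n => sepSet side (γ n) (γ (n + 1)) with hMdef
  have hA0 : A 0 = ∅ := sep_self side o
  have hB0 : B 0 = ∅ := by
    show sepSet side o (γ 0) = ∅
    rw [← hoγ]
    exact sep_self side o
  have hAsucc : ∀ n, A n ∩ N n = ∅ ∧ A (n + 1) = A n ∪ N n := by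
    intro n
    refine hsplit o (β n) (β (n + 1)) ?_
    rw [hdo_β n, hdo_β (n + 1), hβd n (n + 1) (by omega)]; omega
  have hBsucc : ∀ n, B n ∩ M n = ∅ ∧ B (n + 1) = B n ∪ M n := by
    intro n
    refine hsplit o (γ n) (γ (n + 1)) ?_
    rw [hdo_γ n, hdo_γ (n + 1), hγd n (n + 1) (by omega)]; omega
  have hAmono : ∀ n, A n ⊆ A (n + 1) := by
    intro n
    rw [(hAsucc n).2]
    exact Set.subset_union_left
  have hAcard : ∀ n, (A n).ncard = n := fun n => (hdist o (β n)).symm.trans (hdo_β n)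
  have hBcard : ∀ n, (B n).ncard = n := fun n => (hdist o (γ n)).symm.trans (hdo_γ n)
  have hNcard : ∀ n, (N n).ncard = 1 := by
    intro n
    have := hβd n (n + 1) (by omega)
    rw [hdist] at this
    simpa using this
  have hMcard : ∀ n, (M n).ncard = 1 := by
    intro n
    have := hγd n (n + 1) (by omega)
    rw [hdist] at this
    simpa using this
  have hNβ : ∀ n, N n ⊆ raysWalls side β := fun n w hw => ⟨n, hw⟩
  have hMγ : ∀ n, M n ⊆ raysWalls side γ := fun n w hw => ⟨n, hw⟩
  have hflip : ∀ (f : ℕ → V) (w : W) (n : ℕ), side w (f 0) ≠ side w (f n) →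
      w ∈ raysWalls side f := by
    intro f w n
    induction n with
    | zero => intro h; exact absurd rfl h
    | succ n ih =>
      intro h
      by_cases hc : side w (f n) = side w (f (n + 1))
      · exact ih (by rw [hc]; exact h)
      · exact ⟨n, hc⟩
  have hAβ : ∀ n, A n ⊆ raysWalls side β := fun n w hw => hflip β w n hw
  have hBγ : ∀ n, B n ⊆ raysWalls side γ := by
    intro n w hw
    refine hflip γ w n ?_
    rw [← hoγ]
    exact hw
  have hABempty : ∀ w, w ∈ raysWalls side β → w ∈ raysWalls side γ → False := by
    intro w hwβ hwγ
    obtain ⟨v, hv1, hv2⟩ := hcross w hwβ w hwγ true false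
    rw [hv1] at hv2
    exact absurd hv2 (by decide)
  -- the median takes majority side on every wall
  have hmed : ∀ x y z m : V, IsMedianPt Γ x y z m → ∀ w : W,
      (side w m = side w x ∨ side w m = side w y) ∧
      (side w m = side w x ∨ side w m = side w z) ∧
      (side w m = side w y ∨ side w m = side w z) := by
    intro x y z m hm w
    obtain ⟨h1, h2, h3⟩ := hm
    have key : ∀ a b : V, sepSet side a m ∩ sepSet side m b = ∅ →
        side w m = side w a ∨ side w m = side w b := by
      intro a b hab
      by_contra hcon
      push_neg at hcon
      exact Set.eq_empty_iff_forall_notMem.mp hab w ⟨Ne.symm hcon.1, hcon.2⟩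
    exact ⟨key x y (hsplit x m y h1).1, key x z (hsplit x m z h2).1,
      key y z (hsplit y m z h3).1⟩
  -- the key existence of "join" vertices
  have hexists : ∀ k n : ℕ, ∃ v : V, sepSet side o v = A n ∪ B k := by
    intro k
    induction k with
    | zero =>
      intro n
      refine ⟨β n, ?_⟩
      rw [hB0, Set.union_empty]
    | succ k ihk =>
      intro n
      induction n with
      | zero =>
        refine ⟨γ (k + 1), ?_⟩
        rw [hA0, Set.empty_union]
      | succ n ihn =>
        obtain ⟨v₁, hv₁⟩ := ihk (n + 1)
        obtain ⟨v₂, hv₂⟩ := ihn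
        obtain ⟨w₀, hw₀⟩ := Set.ncard_eq_one.mp (hNcard n)
        obtain ⟨w₁, hw₁⟩ := Set.ncard_eq_one.mp (hMcard k)
        have hw₀β : w₀ ∈ raysWalls side β :=
          hNβ n (by rw [hw₀]; exact Set.mem_singleton w₀)
        have hw₁γ : w₁ ∈ raysWalls side γ :=
          hMγ k (by rw [hw₁]; exact Set.mem_singleton w₁)
        obtain ⟨c, hc₀, hc₁⟩ := hcross w₀ hw₀β w₁ hw₁γ (!(side w₀ o)) (!(side w₁ o))
        obtain ⟨m, hm, -⟩ := hmedian v₁ v₂ c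
        refine ⟨m, ?_⟩
        ext w
        obtain ⟨p12, p13, p23⟩ := hmed v₁ v₂ c m hm w
        have hv₁' := Set.ext_iff.mp hv₁ w
        have hv₂' := Set.ext_iff.mp hv₂ w
        simp only [Set.mem_union] at hv₁' hv₂' ⊢
        show side w o ≠ side w m ↔ w ∈ A (n + 1) ∨ w ∈ B (k + 1)
        constructor
        · intro hwm
          by_contra hout
          push_neg at hout
          obtain ⟨hnA, hnB⟩ := hout
          have hnAn : w ∉ A n := fun h => hnA (hAmono n h)
          have hnBk : w ∉ B k := fun h => hnB (by rw [(hBsucc k).2]; exact Or.inl h)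
          have h1 : side w o = side w v₁ := by
            by_contra h
            rcases hv₁'.mp h with h' | h'
            · exact hnA h'
            · exact hnBk h'
          have h2 : side w o = side w v₂ := by
            by_contra h
            rcases hv₂'.mp h with h' | h'
            · exact hnAn h'
            · exact hnB h'
          rcases p12 with h | h
          · exact hwm (h1.trans h.symm)
          · exact hwm (h2.trans h.symm)
        · intro hin
          rcases hin with hA' | hB'
          · by_cases hAn : w ∈ A n
            · have h1 : side w o ≠ side w v₁ := hv₁'.mpr (Or.inl hA')
              have h2 : side w o ≠ side w v₂ := hv₂'.mpr (Or.inl hAn)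
              rcases p12 with h | h
              · exact fun he => h1 (he.trans h)
              · exact fun he => h2 (he.trans h)
            · have hwN : w ∈ N n := by
                have hx : w ∈ A n ∪ N n := by rw [← (hAsucc n).2]; exact hA'
                rcases hx with h | h
                · exact absurd h hAn
                · exact h
              have hww₀ : w = w₀ := by rw [hw₀] at hwN; exact hwN
              have h1 : side w o ≠ side w v₁ := hv₁'.mpr (Or.inl hA')
              have hc' : side w o ≠ side w c := by
                subst hww₀
                rw [hc₀]
                exact bne _
              rcases p13 with h | h
              · exact fun he => h1 (he.trans h)
              · exact fun he => hc' (he.trans h)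
          · by_cases hBk : w ∈ B k
            · have h1 : side w o ≠ side w v₁ := hv₁'.mpr (Or.inr hBk)
              have h2 : side w o ≠ side w v₂ := hv₂'.mpr (Or.inr hB')
              rcases p12 with h | h
              · exact fun he => h1 (he.trans h)
              · exact fun he => h2 (he.trans h)
            · have hwM : w ∈ M k := by
                have hx : w ∈ B k ∪ M k := by rw [← (hBsucc k).2]; exact hB'
                rcases hx with h | h
                · exact absurd h hBk
                · exact h
              have hww₁ : w = w₁ := by rw [hw₁] at hwM; exact hwM
              have h2 : side w o ≠ side w v₂ := hv₂'.mpr (Or.inr hB')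
              have hc' : side w o ≠ side w c := by
                subst hww₁
                rw [hc₁]
                exact bne _
              rcases p23 with h | h
              · exact fun he => h2 (he.trans h)
              · exact fun he => hc' (he.trans h)
  choose J hJ using hexists
  set σ : ℕ → V := fun t => J (t / 2) ((t + 1) / 2) with hσdef
  have hσsep : ∀ t, sepSet side o (σ t) = A ((t + 1) / 2) ∪ B (t / 2) :=
    fun t => hJ (t / 2) ((t + 1) / 2)
  have hAfin : ∀ n, (A n).Finite := fun n => hfin o (β n)
  have hBfin : ∀ n, (B n).Finite := fun n => hfin o (γ n)
  have hABdisj : ∀ n k, Disjoint (A n) (B k) := fun n k =>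
    Set.disjoint_left.mpr fun w hw hw' => hABempty w (hAβ n hw) (hBγ k hw')
  have hσdist : ∀ t, Γ.dist o (σ t) = t := by
    intro t
    rw [hdist, hσsep t, Set.ncard_union_eq (hABdisj _ _) (hAfin _) (hBfin _),
      hAcard, hBcard]
    omega
  have hstep : ∀ t, sepSet side (σ t) (σ (t + 1)) = N (t / 2) ∨
      sepSet side (σ t) (σ (t + 1)) = M (t / 2) := by
    intro t
    have hsym : sepSet side (σ t) (σ (t + 1)) =
        symmDiff (sepSet side o (σ t)) (sepSet side o (σ (t + 1))) := by
      rw [sep_symmDiff side (σ t) o (σ (t + 1)), sep_comm side (σ t) o]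
    rcases Nat.even_or_odd t with ⟨j, hj⟩ | ⟨j, hj⟩
    · left
      have e1 : (t + 1) / 2 = j := by omega
      have e2 : t / 2 = j := by omega
      have e3 : (t + 1 + 1) / 2 = j + 1 := by omega
      rw [hsym, hσsep, hσsep, e1, e2, e3, (hAsucc j).2]
      have hdisj := Set.eq_empty_iff_forall_notMem.mp (hAsucc j).1
      have hsub : A j ∪ B j ⊆ (A j ∪ N j) ∪ B j := by
        intro w hw
        rcases hw with h | h
        · exact Or.inl (Or.inl h)
        · exact Or.inr h
      rw [symmDiff_of_le hsub]
      ext w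
      simp only [Set.mem_diff, Set.mem_union]
      constructor
      · rintro ⟨(h1 | h1) | h1, h2⟩
        · exact absurd (Or.inl h1) h2
        · exact h1
        · exact absurd (Or.inr h1) h2
      · intro hw
        refine ⟨Or.inl (Or.inr hw), ?_⟩
        rintro (h | h)
        · exact hdisj w ⟨h, hw⟩
        · exact hABempty w (hNβ j hw) (hBγ j h)
    · right
      have e1 : (t + 1) / 2 = j + 1 := by omega
      have e2 : t / 2 = j := by omega
      have e3 : (t + 1 + 1) / 2 = j + 1 := by omega
      rw [hsym, hσsep, hσsep, e1, e2, e3, (hBsucc j).2]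
      have hdisj := Set.eq_empty_iff_forall_notMem.mp (hBsucc j).1
      have hsub : A (j + 1) ∪ B j ⊆ A (j + 1) ∪ (B j ∪ M j) := by
        intro w hw
        rcases hw with h | h
        · exact Or.inl h
        · exact Or.inr (Or.inl h)
      rw [symmDiff_of_le hsub]
      ext w
      simp only [Set.mem_diff, Set.mem_union]
      constructor
      · rintro ⟨h1 | h1 | h1, h2⟩
        · exact absurd (Or.inl h1) h2
        · exact absurd (Or.inr h1) h2
        · exact h1
      · intro hw
        refine ⟨Or.inr (Or.inr hw), ?_⟩
        rintro (h | h)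
        · exact hABempty w (hAβ (j + 1) h) (hMγ j hw)
        · exact hdisj w ⟨h, hw⟩
  have hadjσ : ∀ t, Γ.Adj (σ t) (σ (t + 1)) := by
    intro t
    apply hadj1
    rcases hstep t with h | h
    · rw [h]; exact hNcard _
    · rw [h]; exact hMcard _
  have hσ0 : σ 0 = o := by
    refine (hsep_eq o (σ 0) ?_).symm
    rw [hσsep 0]
    show A 0 ∪ B 0 = ∅
    rw [hA0, hB0, Set.union_empty]
  have hupper : ∀ s d, Γ.dist (σ s) (σ (s + d)) ≤ d := by
    intro s d
    induction d with
    | zero => simp [SimpleGraph.dist_self]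
    | succ d ih =>
      have htr := hconn.dist_triangle (u := σ s) (v := σ (s + d)) (w := σ (s + d + 1))
      have h1 : Γ.dist (σ (s + d)) (σ (s + d + 1)) = 1 :=
        SimpleGraph.dist_eq_one_iff_adj.mpr (hadjσ (s + d))
      show Γ.dist (σ s) (σ (s + d + 1)) ≤ d + 1
      omega
  have hσgeo : IsGeodesicRay Γ σ := by
    refine ⟨hadjσ, ?_⟩
    intro s t hst
    obtain ⟨d, rfl⟩ : ∃ d, t = s + d := ⟨t - s, by omega⟩
    have hup := hupper s d
    have htr := hconn.dist_triangle (u := o) (v := σ s) (w := σ (s + d))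
    rw [hσdist, hσdist] at htr
    omega
  refine ⟨σ, hσgeo, hσ0, ?_⟩
  ext w
  simp only [Set.mem_union]
  constructor
  · rintro ⟨t, ht⟩
    have hw : w ∈ sepSet side (σ t) (σ (t + 1)) := ht
    rcases hstep t with h | h
    · rw [h] at hw
      exact Or.inl (hNβ _ hw)
    · rw [h] at hw
      exact Or.inr (hMγ _ hw)
  · intro h
    have key : ∀ m, w ∈ sepSet side o (σ m) → w ∈ raysWalls side σ := by
      intro m hm
      refine hflip σ w m ?_
      rw [hσ0]
      exact hm
    rcases h with ⟨t, ht⟩ | ⟨t, ht⟩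
    · refine key (2 * t + 2) ?_
      rw [hσsep]
      have e1 : (2 * t + 2 + 1) / 2 = t + 1 := by omega
      rw [e1]
      refine Or.inl ?_
      rw [(hAsucc t).2]
      exact Or.inr ht
    · refine key (2 * t + 2) ?_
      rw [hσsep]
      have e2 : (2 * t + 2) / 2 = t + 1 := by omega
      rw [e2]
      refine Or.inr ?_
      rw [(hBsucc t).2]
      exact Or.inr ht
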